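/- Let G=(V,E) be a graph. A function f : V → {0,1,2} is a minimal perfect Roman dominating function if and only if the following three conditions hold: (1) for all v ∈ V_0(f), |N(v) ∩ V_2(f)| = 1; (2) for all v ∈ V_1(f), |N(v) ∩ V_2(f)| ≠ 1; (3) for all v ∈ V_2(f), |N(v) ∩ V_0(f)| ≠ 0. -/

import Mathlib

lemma card_filter_eq_one_iff {α : Type*} [DecidableEq α] {s : Finset α} {p : α → Prop}
    [DecidablePred p] : (s.filter p).card = 1 ↔ ∃! a, a ∈ s ∧ p a := by
  rw [Finset.card_eq_one]
  constructor
  · rintro ⟨a, ha⟩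
    rw [Finset.eq_singleton_iff_unique_mem] at ha
    obtain ⟨h1, h2⟩ := ha
    rw [Finset.mem_filter] at h1
    exact ⟨a, h1, fun y hy => h2 y (Finset.mem_filter.mpr hy)⟩
  · rintro ⟨a, ha, huniq⟩
    refine ⟨a, ?_⟩
    rw [Finset.eq_singleton_iff_unique_mem]
    exact ⟨Finset.mem_filter.mpr ha, fun y hy => huniq y (Finset.mem_filter.mp hy)⟩

private lemma fin3_cases (x : Fin 3) : x = 0 ∨ x = 1 ∨ x = 2 := by revert x; decide

private lemma fin3_le2 : ∀ a b : Fin 3, a ≤ b → a = 2 → b = 2 := by decide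

private lemma fin3_le0 : ∀ a b : Fin 3, a ≤ b → b = 0 → a = 0 := by decide

private lemma fin3_le1 : ∀ a b : Fin 3, a ≤ b → b = 1 → a ≠ 1 → a = 0 := by decide

/-- A perfect Roman dominating function: every vertex with value 0 has exactly one
neighbor with value 2. -/
def IsPRDF {V : Type*} (G : SimpleGraph V) (f : V → Fin 3) : Prop :=
  ∀ v, f v = 0 → ∃! u, G.Adj v u ∧ f u = 2

theorem stmt7 {V : Type*} [Fintype V] [DecidableEq V] (G : SimpleGraph V)
    [DecidableRel G.Adj] (f : V → Fin 3) :
    -- f is a minimal pRdf (w.r.t. the pointwise order) iff the three conditions hold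
    Minimal (IsPRDF G) f ↔
      ((∀ v, f v = 0 → ((G.neighborFinset v).filter (fun u => f u = 2)).card = 1) ∧
       (∀ v, f v = 1 → ((G.neighborFinset v).filter (fun u => f u = 2)).card ≠ 1) ∧
       (∀ v, f v = 2 → ((G.neighborFinset v).filter (fun u => f u = 0)).card ≠ 0)) := by
  constructor
  · rintro ⟨hf, hmin⟩
    refine ⟨?_, ?_, ?_⟩
    · intro v hv
      rw [card_filter_eq_one_iff]
      obtain ⟨u, ⟨h1, h2⟩, huniq⟩ := hf v hv
      exact ⟨u, ⟨(SimpleGraph.mem_neighborFinset G v u).mpr h1, h2⟩,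
        fun y ⟨hy1, hy2⟩ => huniq y ⟨(SimpleGraph.mem_neighborFinset G v y).mp hy1, hy2⟩⟩
    · intro v hv hcard
      set g : V → Fin 3 := fun u => if u = v then 0 else f u with hgdef
      have hg2 : ∀ u, g u = 2 ↔ f u = 2 := by
        intro u
        by_cases h : u = v
        · subst h; simp [hgdef, hv]
        · simp [hgdef, h]
      have hgle : g ≤ f := by
        intro u
        by_cases h : u = v
        · subst h; simp [hgdef, Fin.zero_le]
        · simp [hgdef, h]
      have hg : IsPRDF G g := by
        intro w hw
        by_cases hwv : w = v
        · subst hwv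
          obtain ⟨u, hu, huniq⟩ := card_filter_eq_one_iff.mp hcard
          refine ⟨u, ⟨(SimpleGraph.mem_neighborFinset G w u).mp hu.1, (hg2 u).mpr hu.2⟩,
            fun y ⟨hy1, hy2⟩ => ?_⟩
          exact huniq y ⟨(SimpleGraph.mem_neighborFinset G w y).mpr hy1, (hg2 y).mp hy2⟩
        · have hfw : f w = 0 := by simpa [hgdef, hwv] using hw
          obtain ⟨u, ⟨hu1, hu2⟩, huniq⟩ := hf w hfw
          exact ⟨u, ⟨hu1, (hg2 u).mpr hu2⟩,
            fun y ⟨hy1, hy2⟩ => huniq y ⟨hy1, (hg2 y).mp hy2⟩⟩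
      have hle := hmin hg hgle v
      have hgv : g v = 0 := by simp [hgdef]
      rw [hgv] at hle
      rw [fin3_le0 _ _ hle rfl] at hv
      exact absurd hv (by decide)
    · intro v hv hcard
      have hempty : ∀ u, G.Adj v u → f u ≠ 0 := by
        intro u hadj hu0
        have h := Finset.card_eq_zero.mp hcard
        have hm : u ∈ (G.neighborFinset v).filter (fun u => f u = 0) := by
          rw [Finset.mem_filter, SimpleGraph.mem_neighborFinset]
          exact ⟨hadj, hu0⟩
        rw [h] at hm
        exact absurd hm (Finset.notMem_empty u)
      set g : V → Fin 3 := fun u => if u = v then 1 else f u with hgdef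
      have hgle : g ≤ f := by
        intro u
        by_cases h : u = v
        · subst h; simp only [hgdef, if_pos rfl, hv]; exact (by decide : (1 : Fin 3) ≤ 2)
        · simp [hgdef, h]
      have hg : IsPRDF G g := by
        intro w hw
        have hwv : w ≠ v := by
          intro h; rw [h] at hw; simp [hgdef] at hw
        have hfw : f w = 0 := by simpa [hgdef, hwv] using hw
        obtain ⟨u, ⟨hu1, hu2⟩, huniq⟩ := hf w hfw
        have hune : u ≠ v := by
          intro h
          exact hempty w (h ▸ hu1).symm hfw
        refine ⟨u, ⟨hu1, by simp [hgdef, hune, hu2]⟩, fun y ⟨hy1, hy2⟩ => ?_⟩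
        have hyne : y ≠ v := by
          intro h; rw [h] at hy2; simp [hgdef] at hy2
        refine huniq y ⟨hy1, ?_⟩
        simpa [hgdef, hyne] using hy2
      have hle := hmin hg hgle v
      have hgv : g v = 1 := by simp [hgdef]
      rw [hgv, hv] at hle
      have hfalse : ¬ ((2 : Fin 3) ≤ (1 : Fin 3)) := by decide
      exact hfalse hle
  · rintro ⟨h0, h1, h2⟩
    have hf : IsPRDF G f := by
      intro v hv
      obtain ⟨u, hu, huniq⟩ := card_filter_eq_one_iff.mp (h0 v hv)
      refine ⟨u, ⟨(SimpleGraph.mem_neighborFinset G v u).mp hu.1, hu.2⟩,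
        fun y ⟨hy1, hy2⟩ => huniq y ⟨(SimpleGraph.mem_neighborFinset G v y).mpr hy1, hy2⟩⟩
    refine ⟨hf, ?_⟩
    intro g hg hgle
    have key2 : ∀ v, f v = 2 → g v = 2 := by
      intro v hv
      by_contra hne
      obtain ⟨w, hw⟩ := Finset.card_ne_zero.mp (h2 v hv)
      rw [Finset.mem_filter] at hw
      obtain ⟨hwm, hw0⟩ := hw
      have hadj : G.Adj v w := (SimpleGraph.mem_neighborFinset G v w).mp hwm
      have hgw : g w = 0 := fin3_le0 _ _ (hgle w) hw0
      obtain ⟨u, ⟨hu1, hu2⟩, _⟩ := hg w hgw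
      have hfu : f u = 2 := fin3_le2 _ _ (hgle u) hu2
      obtain ⟨z, hz, hzuniq⟩ := card_filter_eq_one_iff.mp (h0 w hw0)
      have h1' : u = z := hzuniq u ⟨(SimpleGraph.mem_neighborFinset G w u).mpr hu1, hfu⟩
      have h2' : v = z := hzuniq v ⟨(SimpleGraph.mem_neighborFinset G w v).mpr hadj.symm, hv⟩
      rw [h1', ← h2'] at hu2
      exact hne hu2
    have keyset : ∀ u, g u = 2 ↔ f u = 2 :=
      fun u => ⟨fun h => fin3_le2 _ _ (hgle u) h, fun h => key2 u h⟩
    have key : ∀ v, f v ≤ g v := by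
      intro v
      rcases fin3_cases (f v) with h|h|h
      · rw [h]; exact Fin.zero_le _
      · by_cases hne : g v = f v
        · rw [hne]
        · have hg0 : g v = 0 := fin3_le1 _ _ (hgle v) h (h ▸ hne)
          obtain ⟨u, ⟨hu1, hu2⟩, huniq⟩ := hg v hg0
          exact absurd (card_filter_eq_one_iff.mpr
            ⟨u, ⟨(SimpleGraph.mem_neighborFinset G v u).mpr hu1, (keyset u).mp hu2⟩,
             fun y ⟨hy1, hy2⟩ => huniq y
               ⟨(SimpleGraph.mem_neighborFinset G v y).mp hy1, (keyset y).mpr hy2⟩⟩)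
            (h1 v h)
      · rw [h, key2 v h]
    exact key
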